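/- Assume in addition that there is ε > 0 with u_k ≥ ε for every k ≥ 0, and for an integer d ≥ 1 set δ_d := sup_{k ≥ d} |u_k − 1/μ|. Then there is a constant C < ∞, depending only on ε and μ, such that for all integers d ≥ 1 and all N, r, s with d ≤ r ≤ s ≤ N − d: |u_N/(μ·u_r·u_{N−s}) − 1| ≤ C·δ_d. (Interpretation: if P_N is the renewal process on {0,…,N} conditioned to have renewal points at 0 and N, E is the event that r and s are renewal points with a prescribed renewal configuration in between, and P is the stationary renewal process with the same waiting-time distribution, then |P_N(E) − P(E)| ≤ C·P_N(E)·δ_d.) -/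

import Mathlib

noncomputable section

/-- The renewal sequence `(u_N)` associated with the waiting-time distribution
`(q_n)_{n ≥ 1}`: `u_0 = 1` and `u_N = Σ_{n=1}^N q_n · u_{N-n}`. -/
def renewalSeq (q : ℕ → ℝ) : ℕ → ℝ
  | 0 => 1
  | N + 1 => ∑ n ∈ Finset.range (N + 1), q (n + 1) * renewalSeq q (N - n)
  decreasing_by omega

lemma renewalSeq_le_one (q : ℕ → ℝ) (h0 : q 0 = 0) (hq : ∀ n, 0 ≤ q n)
    (hs : HasSum q 1) : ∀ N, renewalSeq q N ≤ 1 := by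
  intro N
  induction N using Nat.strong_induction_on with
  | _ N ih =>
    match N with
    | 0 => simp [renewalSeq]
    | N + 1 =>
      rw [renewalSeq]
      calc ∑ n ∈ Finset.range (N + 1), q (n + 1) * renewalSeq q (N - n)
          ≤ ∑ n ∈ Finset.range (N + 1), q (n + 1) := by
            apply Finset.sum_le_sum
            intro n hn
            have h1 := ih (N - n) (by omega)
            nlinarith [hq (n + 1)]
        _ = ∑ n ∈ Finset.range (N + 2), q n := by
            rw [Finset.sum_range_succ' q (N + 1), h0, add_zero]
        _ ≤ 1 := sum_le_hasSum _ (fun i _ => hq i) hs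

theorem renewal_conditioned_vs_stationary (ε μ : ℝ) (hε : 0 < ε) :
    ∃ C : ℝ, ∀ q : ℕ → ℝ, q 0 = 0 → (∀ n, 0 ≤ q n) → HasSum q 1 →
      Summable (fun n : ℕ => (n : ℝ) * q n) → (∑' n : ℕ, (n : ℝ) * q n) = μ →
      (∀ k, ε ≤ renewalSeq q k) →
      ∀ d : ℕ, 1 ≤ d → ∀ N r s : ℕ, d ≤ r → r ≤ s → s + d ≤ N →
        |renewalSeq q N / (μ * renewalSeq q r * renewalSeq q (N - s)) - 1|
          ≤ C * ⨆ k : {k : ℕ // d ≤ k}, |renewalSeq q (k : ℕ) - 1 / μ| := by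
  refine ⟨(3 + 2 * μ) / ε ^ 2, ?_⟩
  intro q h0 hq hsum hμsum hμeq hεle d hd N r s hdr hrs hsN
  -- μ ≥ 1
  have hμ1 : 1 ≤ μ := by
    rw [← hsum.tsum_eq, ← hμeq]
    apply Summable.tsum_le_tsum _ hsum.summable hμsum
    intro n
    match n with
    | 0 => simp [h0]
    | n + 1 =>
      have h1 : (1 : ℝ) ≤ ((n + 1 : ℕ) : ℝ) := by exact_mod_cast Nat.one_le_iff_ne_zero.2 (by omega)
      nlinarith [hq (n + 1)]
  have hμ0 : 0 < μ := by linarith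
  have hle1 := renewalSeq_le_one q h0 hq hsum
  have h4 : 1 / μ ≤ 1 := by rw [div_le_one hμ0]; linarith
  have h3 : 0 < 1 / μ := by positivity
  have habs : ∀ k : ℕ, |renewalSeq q k - 1 / μ| ≤ 2 := by
    intro k
    have h1 : ε ≤ renewalSeq q k := hεle k
    have h2 : renewalSeq q k ≤ 1 := hle1 k
    rw [abs_le]; constructor <;> nlinarith
  set δ := ⨆ k : {k : ℕ // d ≤ k}, |renewalSeq q (k : ℕ) - 1 / μ| with hδdef
  have hbdd : BddAbove (Set.range fun k : {k : ℕ // d ≤ k} => |renewalSeq q (k : ℕ) - 1 / μ|) :=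
    ⟨2, by rintro x ⟨k, rfl⟩; exact habs k⟩
  have hdk : ∀ k : ℕ, d ≤ k → |renewalSeq q k - 1 / μ| ≤ δ := fun k hk =>
    le_ciSup hbdd (⟨k, hk⟩ : {k : ℕ // d ≤ k})
  have hδ0 : 0 ≤ δ := le_trans (abs_nonneg _) (hdk d le_rfl)
  have hδ2 : δ ≤ 2 := ciSup_le fun k => habs k
  have hN : d ≤ N := by omega
  have hNs : d ≤ N - s := by omega
  have ha := hdk N hN
  have hb := hdk r hdr
  have hc := hdk (N - s) hNs
  set a := renewalSeq q N
  set b := renewalSeq q r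
  set c := renewalSeq q (N - s)
  have hbε : ε ≤ b := hεle r
  have hcε : ε ≤ c := hεle (N - s)
  have hD : μ * ε ^ 2 ≤ μ * b * c := by
    have h5 : ε * ε ≤ b * c := mul_le_mul hbε hcε hε.le (by linarith)
    calc μ * ε ^ 2 = μ * (ε * ε) := by ring
      _ ≤ μ * (b * c) := by exact mul_le_mul_of_nonneg_left h5 hμ0.le
      _ = μ * b * c := by ring
  have hDpos : 0 < μ * b * c := lt_of_lt_of_le (by positivity) hD
  -- decomposition
  have tri : ∀ x y : ℝ, |x - y| ≤ |x| + |y| := fun x y => by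
    rw [sub_eq_add_neg]; exact (abs_add_le x (-y)).trans (by rw [abs_neg])
  have e1 : a - μ * b * c =
      (a - 1 / μ) - (b - 1 / μ) - (c - 1 / μ) - μ * ((b - 1 / μ) * (c - 1 / μ)) := by
    field_simp
    ring
  have hβγ : |(b - 1 / μ) * (c - 1 / μ)| ≤ δ * δ := by
    rw [abs_mul]; exact mul_le_mul hb hc (abs_nonneg _) hδ0
  have hnum : |a - μ * b * c| ≤ (3 + 2 * μ) * δ := by
    calc |a - μ * b * c|
        = |(a - 1/μ) - (b - 1/μ) - (c - 1/μ) - μ * ((b - 1/μ) * (c - 1/μ))| := by rw [e1]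
      _ ≤ |(a - 1/μ) - (b - 1/μ) - (c - 1/μ)| + |μ * ((b - 1/μ) * (c - 1/μ))| := tri _ _
      _ ≤ (|(a - 1/μ) - (b - 1/μ)| + |c - 1/μ|) + μ * |(b - 1/μ) * (c - 1/μ)| := by
          rw [abs_mul, abs_of_pos hμ0]
          exact add_le_add (tri _ _) le_rfl
      _ ≤ ((|a - 1/μ| + |b - 1/μ|) + |c - 1/μ|) + μ * |(b - 1/μ) * (c - 1/μ)| :=
          add_le_add (add_le_add (tri _ _) le_rfl) le_rfl
      _ ≤ ((δ + δ) + δ) + μ * (δ * δ) :=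
          add_le_add (add_le_add (add_le_add ha hb) hc) (mul_le_mul_of_nonneg_left hβγ hμ0.le)
      _ ≤ (3 + 2 * μ) * δ := by nlinarith [mul_nonneg hμ0.le hδ0]
  rw [div_sub_one (ne_of_gt hDpos), abs_div, abs_of_pos hDpos, div_le_iff₀ hDpos]
  have e2 : (3 + 2 * μ) / ε ^ 2 * δ * (μ * ε ^ 2) = (3 + 2 * μ) * δ * μ := by
    field_simp
  calc |a - μ * b * c| ≤ (3 + 2 * μ) * δ := hnum
    _ ≤ (3 + 2 * μ) / ε ^ 2 * δ * (μ * ε ^ 2) := by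
        rw [e2]; nlinarith [mul_nonneg (mul_nonneg (by linarith : (0:ℝ) ≤ 3 + 2*μ) hδ0) (by linarith : (0:ℝ) ≤ μ - 1)]
    _ ≤ (3 + 2 * μ) / ε ^ 2 * δ * (μ * b * c) := by
        apply mul_le_mul_of_nonneg_left hD
        positivity
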